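/- Let f : ℤ → ℤ satisfy the step condition |f x - x| ≤ 1 for all x. Suppose e is an equilibrium (f e = e), e < b, and the orbit of b reaches e, i.e. f^[k] b = e for some k. Then f d = d - 1 for every d with e < d ≤ b. (The downward case of the paper's monotone chain structure: if a state leads downward to a lower equilibrium, every intermediate state leads one step downward.) -/
import Mathlib

/-- Downward case: if a state's orbit reaches a lower equilibrium,
every intermediate state leads one step downward. -/
theorem monotone_chain_down (f : ℤ → ℤ)
    (hstep : ∀ x : ℤ, |f x - x| ≤ 1)
    {b e : ℤ} (heq : f e = e) (heb : e < b)
    {k : ℕ} (horbit : f^[k] b = e) :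
    ∀ d : ℤ, e < d → d ≤ b → f d = d - 1 := by
  intro d hed hdb
  by_contra h
  have hfd : d ≤ f d := by
    have := hstep d; rw [abs_le] at this; omega
  have key : ∀ n, d ≤ f^[n] b := by
    intro n
    induction n with
    | zero => simpa
    | succ n ih =>
      rw [Function.iterate_succ_apply']
      rcases eq_or_lt_of_le ih with h1 | h1
      · rw [← h1]; exact hfd
      · have := hstep (f^[n] b); rw [abs_le] at this; omega
  have := key k; omega
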